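/- Let B = (B,+) be an abelian group, C = (C,·) a group, and φ, γ, ψ : C → Aut(B) group homomorphisms satisfying φ_c γ_{c'} = γ_{c'} φ_c and φ_{c'}(γ_{cc'} ψ_{cc'}^{-1} − γ_{c'} ψ_{c'}^{-1}) = γ_c ψ_c^{-1} − id_B for all c, c' ∈ C, so that B × C with the operations (b_1,c_1) + (b_2,c_2) = (b_1 + φ_{c_1}(b_2), c_1c_2) and ((φ_{c_1}γ_{c_1})(b_1), c_1) ∘ ((φ_{c_2}γ_{c_2})(b_2), c_2) = ((φ_{c_1c_2}γ_{c_1c_2})(ψ_{c_2}^{-1}(b_1) + b_2), c_1c_2) is a skew brace. Then for any subgroup I of B, the subset I × {1} is an ideal of (B × C, +, ∘) if and only if φ_c(I) ⊆ I, γ_c(I) ⊆ I, and ψ_c(I) ⊆ I for all c ∈ C. -/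

import Mathlib

variable {B C : Type*} [AddCommGroup B] [Group C]

/-- The multiplicative group structure that the older Mathlib put on `AddAut A`
(multiplication is composition, `(e₁ * e₂) x = e₁ (e₂ x)`). -/
instance addAutGroupOld (A : Type*) [Add A] : Group (AddAut A) where
  mul g h := AddEquiv.trans h g
  one := AddEquiv.refl _
  inv := AddEquiv.symm
  mul_assoc _ _ _ := rfl
  one_mul _ := rfl
  mul_one _ := rfl
  inv_mul_cancel := AddEquiv.self_trans_symm

/-- The addition `(b₁,c₁) + (b₂,c₂) = (b₁ + φ_{c₁}(b₂), c₁c₂)` on `B × C`. -/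
def sbAdd (φ : C →* AddAut B) : B × C → B × C → B × C :=
  fun p q => (p.1 + φ p.2 q.1, p.2 * q.2)

/-- Negation for `sbAdd`: `-(b,c) = (φ_{c⁻¹}(-b), c⁻¹)`. -/
def sbNeg (φ : C →* AddAut B) : B × C → B × C :=
  fun p => (φ p.2⁻¹ (-p.1), p.2⁻¹)

/-- The multiplication on `B × C` determined by
`((φ_{c₁}γ_{c₁})(b₁), c₁) ∘ ((φ_{c₂}γ_{c₂})(b₂), c₂)
  = ((φ_{c₁c₂}γ_{c₁c₂})(ψ_{c₂}⁻¹(b₁) + b₂), c₁c₂)`. -/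
def sbMul2 (φ γ ψ : C →* AddAut B) : B × C → B × C → B × C :=
  fun p q =>
    (φ (p.2 * q.2) (γ (p.2 * q.2)
      ((ψ q.2).symm ((γ p.2).symm ((φ p.2).symm p.1)) +
        (γ q.2).symm ((φ q.2).symm q.1))),
     p.2 * q.2)

/-- A subset `S` of `A` is an ideal of the skew brace `(A, add, mul)` with
identity `zero` (shared by both operations): `S` is a subgroup of `(A,+)`,
normal in `(A,+)`, normal in `(A,∘)` (conjugates `a ∘ x ∘ a⁻¹` of elements
of `S`, where `a⁻¹` is the `∘`-inverse of `a`, characterised by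
`a ∘ a⁻¹ = 0`, stay in `S`), and `λ_a(S) = S` for every `a`, where
`λ_a(b) = -a + a ∘ b`. -/
def IsIdealOf {A : Type*} (add : A → A → A) (neg : A → A)
    (mul : A → A → A) (zero : A) (S : Set A) : Prop :=
  zero ∈ S ∧ (∀ x ∈ S, ∀ y ∈ S, add x y ∈ S) ∧ (∀ x ∈ S, neg x ∈ S) ∧
    (∀ a : A, ∀ x ∈ S, add (add a x) (neg a) ∈ S) ∧
    (∀ a x ainv : A, x ∈ S → mul a ainv = zero → mul (mul a x) ainv ∈ S) ∧
    (∀ a : A, (fun b => add (neg a) (mul a b)) '' S = S)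

@[simp] lemma oldOne_apply (x : B) : (1 : AddAut B) x = x := rfl

lemma oldMul_apply (e f : AddAut B) (x : B) : (e * f) x = e (f x) := rfl

@[simp] lemma oldInv_apply (e : AddAut B) (x : B) : e⁻¹ x = e.symm x := rfl

lemma oldInv_def (e : AddAut B) : e⁻¹ = e.symm := rfl

lemma symm_one_apply (x : B) : (AddEquiv.symm (1 : AddAut B)) x = x := rfl

lemma inv_apply_apply (φ : C →* AddAut B) (c : C) (y : B) : φ c⁻¹ (φ c y) = y := by
  rw [← oldMul_apply, ← map_mul, inv_mul_cancel, map_one]; rfl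

lemma symm_inv_apply (φ : C →* AddAut B) (c : C) (y : B) :
    (φ c⁻¹).symm y = φ c y := by
  rw [map_inv, ← oldInv_def, inv_inv]

lemma mul_right_one (φ γ ψ : C →* AddAut B) (b : B) (c : C) (x : B) :
    sbMul2 φ γ ψ (b, c) (x, 1) = (b + φ c (γ c x), c) := by
  simp [sbMul2, map_add, symm_one_apply]

lemma lam_eq (φ γ ψ : C →* AddAut B) (b : B) (c : C) (x : B) :
    sbAdd φ (sbNeg φ (b, c)) (sbMul2 φ γ ψ (b, c) (x, 1)) = (γ c x, 1) := by
  simp [sbAdd, sbNeg, mul_right_one, map_add, map_neg, inv_apply_apply]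

lemma addconj_eq (φ : C →* AddAut B) (b : B) (c : C) (x : B) :
    sbAdd φ (sbAdd φ (b, c) (x, 1)) (sbNeg φ (b, c)) = (φ c x, 1) := by
  simp only [sbAdd, sbNeg]
  refine Prod.ext ?_ (by simp)
  simp [map_add, map_neg, map_mul, oldMul_apply, inv_apply_apply]

lemma mul_inv_simple (φ γ ψ : C →* AddAut B) (c : C) :
    sbMul2 φ γ ψ (0, c) (0, c⁻¹) = (0, 1) := by
  simp [sbMul2]

lemma conj_eq (φ γ ψ : C →* AddAut B) (b : B) (c : C) (x : B) (b' : B) (c' : C)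
    (h : sbMul2 φ γ ψ (b, c) (b', c') = (0, 1)) :
    sbMul2 φ γ ψ (sbMul2 φ γ ψ (b, c) (x, 1)) (b', c') = (ψ c x, 1) := by
  have hc : c * c' = 1 := congrArg Prod.snd h
  have hc' : c' = c⁻¹ := eq_inv_of_mul_eq_one_right hc
  have h1 : (ψ c').symm ((γ c).symm ((φ c).symm b)) +
      (γ c').symm ((φ c').symm b') = 0 := by
    have := congrArg Prod.fst h
    simp only [sbMul2, hc] at this
    simpa using this
  subst hc'
  rw [mul_right_one]
  simp only [sbMul2, hc]
  refine Prod.ext ?_ rfl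
  simp only [symm_inv_apply] at h1
  simp only [map_add, map_one, AddEquiv.symm_apply_apply, symm_inv_apply, oldOne_apply]
  rw [add_right_comm, h1, zero_add]

lemma symm_apply' (φ : C →* AddAut B) (c : C) (y : B) :
    (φ c).symm y = φ c⁻¹ y := by
  rw [map_inv, ← oldInv_def]


/-- **Theorem 3.3(e)**: under the conditions making `(B × C, +, ∘)` (second
construction) a skew brace, for a subgroup `I` of `B` the subset `I × {1}`
is an ideal of `(B × C, +, ∘)` if and only if `I` is invariant under all
`φ_c`, `γ_c` and `ψ_c`. -/
theorem second_construction_ideal_iff (φ γ ψ : C →* AddAut B)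
    (h1 : ∀ (c c' : C) (b : B), φ c (γ c' b) = γ c' (φ c b))
    (h2 : ∀ (c c' : C) (b : B),
      φ c' (γ (c * c') ((ψ (c * c')).symm b) - γ c' ((ψ c').symm b)) =
        γ c ((ψ c).symm b) - b)
    (I : AddSubgroup B) :
    IsIdealOf (sbAdd φ) (sbNeg φ) (sbMul2 φ γ ψ) ((0 : B), (1 : C))
        ((I : Set B) ×ˢ ({1} : Set C)) ↔
    ((∀ c : C, ∀ x ∈ I, φ c x ∈ I) ∧ (∀ c : C, ∀ x ∈ I, γ c x ∈ I) ∧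
      (∀ c : C, ∀ x ∈ I, ψ c x ∈ I)) := by
  constructor
  · rintro ⟨h0, hadd, hneg, haddn, hmuln, hlam⟩
    refine ⟨fun c x hx => ?_, fun c x hx => ?_, fun c x hx => ?_⟩
    · have := haddn (0, c) (x, 1) ⟨hx, rfl⟩
      rw [addconj_eq] at this
      exact this.1
    · have hm : (fun p => sbAdd φ (sbNeg φ (0, c)) (sbMul2 φ γ ψ (0, c) p)) (x, 1)
          ∈ (fun p => sbAdd φ (sbNeg φ (0, c)) (sbMul2 φ γ ψ (0, c) p)) ''
            ((I : Set B) ×ˢ ({1} : Set C)) :=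
        Set.mem_image_of_mem _ ⟨hx, rfl⟩
      rw [hlam (0, c)] at hm
      simp only [lam_eq] at hm
      exact hm.1
    · have := hmuln (0, c) (x, 1) (0, c⁻¹) ⟨hx, rfl⟩ (mul_inv_simple φ γ ψ c)
      rw [conj_eq φ γ ψ 0 c x 0 c⁻¹ (mul_inv_simple φ γ ψ c)] at this
      exact this.1
  · rintro ⟨hφ, hγ, hψ⟩
    refine ⟨⟨I.zero_mem, rfl⟩, ?_, ?_, ?_, ?_, ?_⟩
    · rintro ⟨x, cx⟩ ⟨hx, rfl⟩ ⟨y, cy⟩ ⟨hy, rfl⟩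
      exact ⟨by simpa [sbAdd] using I.add_mem hx hy, by simp [sbAdd]⟩
    · rintro ⟨x, cx⟩ ⟨hx, rfl⟩
      exact ⟨by simpa [sbNeg] using I.neg_mem hx, by simp [sbNeg]⟩
    · rintro ⟨b, c⟩ ⟨x, cx⟩ ⟨hx, rfl⟩
      rw [addconj_eq]
      exact ⟨hφ c x hx, rfl⟩
    · rintro ⟨b, c⟩ ⟨x, cx⟩ ⟨b', c'⟩ ⟨hx, rfl⟩ hinv
      rw [conj_eq φ γ ψ b c x b' c' hinv]
      exact ⟨hψ c x hx, rfl⟩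
    · rintro ⟨b, c⟩
      ext ⟨y, cy⟩
      constructor
      · rintro ⟨⟨x, cx⟩, ⟨hx, rfl⟩, heq⟩
        rw [← heq]
        show sbAdd φ (sbNeg φ (b, c)) (sbMul2 φ γ ψ (b, c) (x, 1)) ∈ _
        rw [lam_eq]
        exact ⟨hγ c x hx, rfl⟩
      · rintro ⟨hy, rfl⟩
        refine ⟨((γ c).symm y, 1), ⟨?_, rfl⟩, ?_⟩
        · rw [symm_apply']
          exact hγ c⁻¹ y hy
        · show sbAdd φ (sbNeg φ (b, c)) (sbMul2 φ γ ψ (b, c) ((γ c).symm y, 1)) = _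
          rw [lam_eq]
          simp
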